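/- Let N ≥ 2, m₀ ∈ L^∞(𝕋), and h ∈ L¹(𝕋) with h ≥ 0, h ≠ 0, and R_{m₀}(h) = h. Set v(z) := h(z)^{1/2} m₀(z). Then for a.e. z with h(z^N) = 0, one has v(z) = 0; consequently m₀'(z) := v(z)/h(z^N)^{1/2} (defined to be 0 where h(z^N)=0) satisfies (1/N) ∑_{w^N=z} |m₀'(w)|² = 1 for a.e. z in the set where h > 0. -/

import Mathlib

open MeasureTheory Filter Set
open scoped Real ENNReal

/-- The Ruelle transfer operator of order `N` with filter `m₀`, on complex
functions on the circle (encoded as `1`-periodic functions on `ℝ`):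
`(Rf)(x) = (1/N) ∑_{k<N} |m₀((x+k)/N)|² f((x+k)/N)`. -/
noncomputable def ruelle (N : ℕ) (m₀ : ℝ → ℂ) (f : ℝ → ℂ) : ℝ → ℂ :=
  fun x => (N : ℂ)⁻¹ *
    ∑ k ∈ Finset.range N, (‖m₀ ((x + k) / N)‖ : ℂ) ^ 2 * f ((x + k) / N)

/-- The Ruelle transfer operator acting on real-valued functions. -/
noncomputable def ruelleR (N : ℕ) (m₀ : ℝ → ℂ) (h : ℝ → ℝ) : ℝ → ℝ :=
  fun x => (N : ℝ)⁻¹ *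
    ∑ k ∈ Finset.range N, ‖m₀ ((x + k) / N)‖ ^ 2 * h ((x + k) / N)

/-- `v(z) = h(z)^{1/2} m₀(z)`. -/
noncomputable def vfun (m₀ : ℝ → ℂ) (h : ℝ → ℝ) : ℝ → ℂ :=
  fun x => (Real.sqrt (h x) : ℂ) * m₀ x

/-- `m₀'(z) = v(z)/h(z^N)^{1/2}`, defined to be `0` where `h(z^N) = 0`. -/
noncomputable def mprime (N : ℕ) (m₀ : ℝ → ℂ) (h : ℝ → ℝ) : ℝ → ℂ :=
  fun x => if h (N * x) = 0 then 0
    else vfun m₀ h x / (Real.sqrt (h (N * x)) : ℂ)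

/-- if `R_{m₀}(h) = h` then `v := h^{1/2}m₀` vanishes a.e. where
`h(z^N) = 0`, and `m₀' := v/h(z^N)^{1/2}` satisfies the quadrature condition
a.e. on the set where `h > 0`. -/
theorem stmt7 (N : ℕ) (hN : 2 ≤ N) (m₀ : ℝ → ℂ) (hm : Measurable m₀)
    (hmb : ∃ C, ∀ᵐ x ∂volume, ‖m₀ x‖ ≤ C)
    (h : ℝ → ℝ) (hhm : Measurable h) (hhper : Function.Periodic h 1)
    (hpos : ∀ x, 0 ≤ h x) (hhi : IntegrableOn h (Set.Ioc (0:ℝ) 1))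
    (hne : ¬ (h =ᵐ[volume] 0))
    (hfix : ruelleR N m₀ h =ᵐ[volume] h) :
    (∀ᵐ x ∂volume, h (N * x) = 0 → vfun m₀ h x = 0) ∧
      (∀ᵐ x ∂volume, 0 < h x →
        (N : ℝ)⁻¹ * ∑ k ∈ Finset.range N,
            ‖mprime N m₀ h ((x + k) / N)‖ ^ 2 = 1) := by
  have hN0 : (N : ℝ) ≠ 0 := by positivity
  -- transfer hfix along x ↦ N x
  have key : ∀ᵐ x ∂volume, ruelleR N m₀ h ((N:ℝ) * x) = h ((N:ℝ) * x) := by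
    simp only [Filter.EventuallyEq, ae_iff] at hfix
    rw [ae_iff]
    have : {x : ℝ | ¬ ruelleR N m₀ h ((N:ℝ) * x) = h ((N:ℝ) * x)}
        = (fun x => (N:ℝ) * x) ⁻¹' {y | ¬ ruelleR N m₀ h y = h y} := rfl
    rw [this, Real.volume_preimage_mul_left hN0, hfix, mul_zero]
  constructor
  · filter_upwards [key] with x hx hz
    have hsum : ∑ k ∈ Finset.range N,
        ‖m₀ (((N:ℝ) * x + k) / N)‖ ^ 2 * h (((N:ℝ) * x + k) / N) = 0 := by
      have := hx
      rw [ruelleR, hz] at this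
      have := this
      field_simp at this
      -- careful: derive sum = 0 from (N:ℝ)⁻¹ * S = 0
      rw [mul_zero] at this
      exact this
    have hnn : ∀ k ∈ Finset.range N,
        0 ≤ ‖m₀ (((N:ℝ) * x + k) / N)‖ ^ 2 * h (((N:ℝ) * x + k) / N) :=
      fun k _ => mul_nonneg (by positivity) (hpos _)
    have h0 := (Finset.sum_eq_zero_iff_of_nonneg hnn).1 hsum 0
      (Finset.mem_range.2 (by omega))
    have hxeq : ((N:ℝ) * x + ((0:ℕ):ℝ)) / N = x := by
      rw [Nat.cast_zero, add_zero, mul_div_cancel_left₀ _ hN0]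
    rw [hxeq] at h0
    rcases mul_eq_zero.1 h0 with hm0 | hh0
    · have : m₀ x = 0 := by
        have := pow_eq_zero_iff (n := 2) (by norm_num) |>.1 hm0
        simpa using this
      simp [vfun, this]
    · simp [vfun, hh0]
  · filter_upwards [hfix] with x hx hxpos
    have hxne : h x ≠ 0 := ne_of_gt hxpos
    have hper : ∀ k : ℕ, h (x + k) = h x := by
      intro k
      have := (hhper.nat_mul k) x
      simpa using this
    have hterm : ∀ k ∈ Finset.range N,
        ‖mprime N m₀ h ((x + k) / N)‖ ^ 2
          = ‖m₀ ((x + k) / N)‖ ^ 2 * h ((x + k) / N) / h x := by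
      intro k _
      have hNk : (N:ℝ) * ((x + k) / N) = x + k := by field_simp
      rw [mprime, hNk, hper k, if_neg hxne, vfun]
      rw [norm_div, norm_mul]
      have h1 : ‖(Real.sqrt (h ((x + k) / N)) : ℂ)‖ = Real.sqrt (h ((x + k) / N)) := by
        simp [Complex.norm_real, Real.sqrt_nonneg, abs_of_nonneg]
      have h2 : ‖(Real.sqrt (h x) : ℂ)‖ = Real.sqrt (h x) := by
        simp [Complex.norm_real, Real.sqrt_nonneg, abs_of_nonneg]
      rw [h1, h2, div_pow, mul_pow, Real.sq_sqrt (hpos _), Real.sq_sqrt (hpos _)]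
      ring
    rw [Finset.sum_congr rfl hterm, ← Finset.sum_div]
    have hS : ∑ k ∈ Finset.range N, ‖m₀ ((x + k) / N)‖ ^ 2 * h ((x + k) / N)
        = (N:ℝ) * h x := by
      have h2 := hx
      rw [ruelleR] at h2
      rw [← h2, ← mul_assoc, mul_inv_cancel₀ hN0, one_mul]
    rw [hS]
    field_simp
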